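/- Let t and ℓ₁, …, ℓ₇ be nonnegative integers with t ≥ 1 and 8ℓ₁ + 5ℓ₂ + 5ℓ₃ + 4ℓ₄ + 4ℓ₅ + 3ℓ₆ + 2ℓ₇ ≤ t. Let w be a symmetric real-valued function on pairs of distinct elements of {1, …, t} with 0 ≤ w(i, j) ≤ 1 for all pairs. Suppose {1, …, t} contains mutually vertex-disjoint subsets as follows: ℓ₁ sets of size 8, each carrying a designated cycle of length 8 all of whose eight edges have weight exactly 1/2; ℓ₂ sets of size 5 with every pair inside of weight exactly 1/2; ℓ₃ sets of size 5, each carrying a designated cycle of length 5 whose five edges have weight exactly 1/2; ℓ₄ sets of size 4 with every pair inside of weight exactly 1/2; ℓ₅ sets of size 4, each carrying a designated cycle of length 4 whose four edges have weight exactly 1/2; ℓ₆ sets of size 3 with every pair inside of weight exactly 1/2; and ℓ₇ pairwise disjoint pairs each of weight exactly 1/2. Then for every u = (u₁, …, u_t) with u_i ≥ 0 and Σ u_i = 1, one has 2·Σ_{1 ≤ i < j ≤ t} w(i, j)·u_i·u_j ≤ 1 − 30/(30t − 120ℓ₁ − 100ℓ₂ − 75ℓ₃ − 72ℓ₄ −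 60ℓ₅ − 45ℓ₆ − 20ℓ₇). -/

import Mathlib

lemma engel37 {a b p q x y : ℝ} (ha : 0 ≤ a) (hb : 0 ≤ b) (hp : 0 ≤ p) (hq : 0 ≤ q)
    (hx : 0 ≤ x) (hy : 0 ≤ y) (h1 : a^2 ≤ p*x) (h2 : b^2 ≤ q*y) :
    (a+b)^2 ≤ (p+q)*(x+y) := by
  have hab : (a*b)^2 ≤ (p*y)*(q*x) := by nlinarith [mul_le_mul h1 h2 (sq_nonneg b) (le_trans (sq_nonneg a) h1)]
  have h3 : 2*(a*b) ≤ p*y + q*x := by nlinarith [sq_nonneg (p*y - q*x), mul_nonneg (mul_nonneg hp hy) (mul_nonneg hq hx), mul_nonneg ha hb, mul_nonneg hp hy, mul_nonneg hq hx]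
  nlinarith [h1, h2, h3]

lemma cyc37 {n : ℕ} [NeZero n] (v : Fin n → ℝ) :
    4 * (∑ i, v i)^2 ≤ (2*(n:ℝ)) * (∑ i, (v i)^2 + ∑ i, v i * v (i+1)) := by
  have hs : ∑ i, v (i+1) = ∑ i, v i := Fintype.sum_equiv (Equiv.addRight 1) _ _ (fun i => rfl)
  have hs2 : ∑ i, (v (i+1))^2 = ∑ i, (v i)^2 := Fintype.sum_equiv (Equiv.addRight 1) _ _ (fun i => rfl)
  have hcs := sq_sum_le_card_mul_sum_sq (s := (Finset.univ : Finset (Fin n))) (f := fun i => v i + v (i+1))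
  have hexp : ∑ i, (v i + v (i+1))^2 = 2*(∑ i, (v i)^2 + ∑ i, v i * v (i+1)) := by
    have : ∀ i : Fin n, (v i + v (i+1))^2 = (v i)^2 + (v (i+1))^2 + 2*(v i * v (i+1)) := fun i => by ring
    rw [Finset.sum_congr rfl (fun i _ => this i)]
    rw [Finset.sum_add_distrib, Finset.sum_add_distrib, hs2, ← Finset.mul_sum]
    ring
  have hsum : ∑ i, (v i + v (i+1)) = 2 * ∑ i, v i := by
    rw [Finset.sum_add_distrib, hs]; ring
  have hn : (0:ℝ) < n := by exact_mod_cast Nat.pos_of_ne_zero (NeZero.ne n)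
  rw [hsum, hexp] at hcs
  simp only [Finset.card_univ, Fintype.card_fin] at hcs
  nlinarith [hcs]


lemma clique37 {n : ℕ} (hn : 0 < n) (v : Fin n → ℝ) :
    ((n:ℝ)+1) * (∑ i, v i)^2 ≤
      (2*(n:ℝ)) * (∑ i, (v i)^2 + ∑ i, ∑ j, (if i ≠ j then (1/2) * (v i * v j) else 0)) := by
  have hsq : (∑ i, v i)^2 = ∑ i : Fin n, ∑ j : Fin n, v i * v j := by
    rw [sq, Finset.sum_mul_sum]
  have hsplit : ∑ i : Fin n, ∑ j : Fin n, v i * v j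
      = ∑ i, (v i)^2 + ∑ i : Fin n, ∑ j : Fin n, (if i ≠ j then v i * v j else 0) := by
    rw [← Finset.sum_add_distrib]
    refine Finset.sum_congr rfl fun i _ => ?_
    have hdiag : ∑ j : Fin n, (if i = j then v i * v j else 0) = v i * v i := by
      rw [Finset.sum_ite_eq]; simp
    have : ∑ j : Fin n, v i * v j
        = (∑ j : Fin n, (if i = j then v i * v j else 0)) + ∑ j : Fin n, (if i ≠ j then v i * v j else 0) := by
      rw [← Finset.sum_add_distrib]
      refine Finset.sum_congr rfl fun j _ => ?_
      by_cases h : i = j <;> simp [h]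
    rw [this, hdiag, sq]
  have hhalf : ∑ i : Fin n, ∑ j : Fin n, (if i ≠ j then (1/2) * (v i * v j) else 0)
      = (1/2) * ∑ i : Fin n, ∑ j : Fin n, (if i ≠ j then v i * v j else 0) := by
    rw [Finset.mul_sum]
    refine Finset.sum_congr rfl fun i _ => ?_
    rw [Finset.mul_sum]
    refine Finset.sum_congr rfl fun j _ => ?_
    split_ifs <;> ring
  have hcs : (∑ i, v i)^2 ≤ (n:ℝ) * ∑ i, (v i)^2 := by
    simpa using sq_sum_le_card_mul_sum_sq (s := (Finset.univ : Finset (Fin n))) (f := v)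
  have hn' : (0:ℝ) < n := by exact_mod_cast hn
  rw [hhalf]
  have hE : ∑ i : Fin n, ∑ j : Fin n, (if i ≠ j then v i * v j else 0)
      = (∑ i, v i)^2 - ∑ i, (v i)^2 := by rw [hsq, hsplit]; ring
  rw [hE]
  nlinarith [hcs]

lemma edge37 (a b : ℝ) : (a+b)^2 ≤ (4/3) * (a^2 + b^2 + a*b) := by
  nlinarith [sq_nonneg (a-b)]

def cycPair37 (n : ℕ) [NeZero n] (x : Fin n × Bool) : Fin n × Fin n :=
  if x.2 then (x.1, x.1+1) else (x.1+1, x.1)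

def edgePair37 (b : Bool) : Fin 2 × Fin 2 := if b then (0,1) else (1,0)

lemma cycPair37_inj8 : Function.Injective (cycPair37 8) := by decide
lemma cycPair37_inj5 : Function.Injective (cycPair37 5) := by decide
lemma cycPair37_inj4 : Function.Injective (cycPair37 4) := by decide
lemma edgePair37_inj : Function.Injective edgePair37 := by decide

lemma cycEval37 {t n : ℕ} [NeZero n] (hne1 : ∀ i : Fin n, i ≠ i + 1)
    (w : Fin t → Fin t → ℝ) (hsymm : ∀ i j, w i j = w j i) (u : Fin t → ℝ)
    (q : Fin n → Fin t) (hq : Function.Injective q)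
    (hhalf : ∀ i, w (q i) (q (i+1)) = 1/2) :
    ∑ x : Fin n × Bool, (if q (cycPair37 n x).1 ≠ q (cycPair37 n x).2 then
      (1 - w (q (cycPair37 n x).1) (q (cycPair37 n x).2)) *
        (u (q (cycPair37 n x).1) * u (q (cycPair37 n x).2)) else 0)
    = ∑ i, u (q i) * u (q (i+1)) := by
  rw [Fintype.sum_prod_type]
  refine Finset.sum_congr rfl fun i _ => ?_
  rw [Fintype.sum_bool]
  have hne : q i ≠ q (i+1) := fun h => hne1 i (hq h)
  have c1 : cycPair37 n (i, true) = (i, i+1) := rfl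
  have c2 : cycPair37 n (i, false) = (i+1, i) := rfl
  rw [c1, c2]
  simp only []
  rw [if_pos hne, if_pos (Ne.symm hne), hhalf i, hsymm (q (i+1)) (q i), hhalf i]
  ring

lemma clqEval37 {t n : ℕ} (w : Fin t → Fin t → ℝ) (u : Fin t → ℝ)
    (q : Fin n → Fin t) (hq : Function.Injective q)
    (hhalf : ∀ i j, i ≠ j → w (q i) (q j) = 1/2) :
    ∑ x : {p : Fin n × Fin n // p.1 ≠ p.2}, (if q x.val.1 ≠ q x.val.2 then
      (1 - w (q x.val.1) (q x.val.2)) * (u (q x.val.1) * u (q x.val.2)) else 0)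
    = ∑ i, ∑ j, (if i ≠ j then (1/2) * (u (q i) * u (q j)) else 0) := by
  have h1 : ∑ x : {p : Fin n × Fin n // p.1 ≠ p.2}, (if q x.val.1 ≠ q x.val.2 then
      (1 - w (q x.val.1) (q x.val.2)) * (u (q x.val.1) * u (q x.val.2)) else 0)
      = ∑ p ∈ Finset.univ.filter (fun p : Fin n × Fin n => p.1 ≠ p.2),
        (if q p.1 ≠ q p.2 then (1 - w (q p.1) (q p.2)) * (u (q p.1) * u (q p.2)) else 0) := by
    rw [Finset.sum_subtype (p := fun p : Fin n × Fin n => p.1 ≠ p.2)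
      (Finset.univ.filter (fun p : Fin n × Fin n => p.1 ≠ p.2)) (by simp)]
  rw [h1, Finset.sum_filter, Fintype.sum_prod_type]
  refine Finset.sum_congr rfl fun i _ => Finset.sum_congr rfl fun j _ => ?_
  by_cases h : i ≠ j
  · have hne : q i ≠ q j := fun hh => h (hq hh)
    rw [if_pos h, if_pos h, if_pos hne, hhalf _ _ h]
    norm_num
  · rw [if_neg h, if_neg h]

lemma edgEval37 {t : ℕ} (w : Fin t → Fin t → ℝ) (hsymm : ∀ i j, w i j = w j i) (u : Fin t → ℝ)
    (q : Fin 2 → Fin t) (hq : Function.Injective q)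
    (hhalf : w (q 0) (q 1) = 1/2) :
    ∑ b : Bool, (if q (edgePair37 b).1 ≠ q (edgePair37 b).2 then
      (1 - w (q (edgePair37 b).1) (q (edgePair37 b).2)) *
        (u (q (edgePair37 b).1) * u (q (edgePair37 b).2)) else 0)
    = u (q 0) * u (q 1) := by
  rw [Fintype.sum_bool]
  have hne : q 0 ≠ q 1 := fun h => by have := hq h; simp at this
  have c1 : edgePair37 true = (0,1) := rfl
  have c2 : edgePair37 false = (1,0) := rfl
  rw [c1, c2]
  simp only []
  rw [if_pos hne, if_pos (Ne.symm hne), hhalf, hsymm (q 1) (q 0), hhalf]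
  ring

def wpair37 {α β γ : Type*} (p : γ → β × β) (x : α × γ) : (α × β) × (α × β) :=
  ((x.1, (p x.2).1), (x.1, (p x.2).2))

lemma wpair37_inj {α β γ : Type*} {p : γ → β × β} (hp : Function.Injective p) :
    Function.Injective (wpair37 (α := α) p) := by
  intro x y h
  simp only [wpair37, Prod.mk.injEq] at h
  obtain ⟨⟨h0, h1⟩, -, h2⟩ := h
  exact Prod.ext h0 (hp (Prod.ext h1 h2))

def dpair37 {A1 A2 A3 A4 A5 A6 A7 B1 B2 B3 B4 B5 B6 B7 : Type*}
    (q1 : B1 → A1 × A1) (q2 : B2 → A2 × A2) (q3 : B3 → A3 × A3) (q4 : B4 → A4 × A4)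
    (q5 : B5 → A5 × A5) (q6 : B6 → A6 × A6) (q7 : B7 → A7 × A7) :
    (B1 ⊕ (B2 ⊕ (B3 ⊕ (B4 ⊕ (B5 ⊕ (B6 ⊕ B7)))))) →
      (A1 ⊕ (A2 ⊕ (A3 ⊕ (A4 ⊕ (A5 ⊕ (A6 ⊕ A7)))))) ×
      (A1 ⊕ (A2 ⊕ (A3 ⊕ (A4 ⊕ (A5 ⊕ (A6 ⊕ A7)))))) :=
  Sum.elim (fun x => (Sum.inl (q1 x).1, Sum.inl (q1 x).2))
    (Sum.elim (fun x => (Sum.inr (Sum.inl (q2 x).1), Sum.inr (Sum.inl (q2 x).2)))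
      (Sum.elim (fun x => (Sum.inr (Sum.inr (Sum.inl (q3 x).1)), Sum.inr (Sum.inr (Sum.inl (q3 x).2))))
        (Sum.elim (fun x => (Sum.inr (Sum.inr (Sum.inr (Sum.inl (q4 x).1))),
            Sum.inr (Sum.inr (Sum.inr (Sum.inl (q4 x).2)))))
          (Sum.elim (fun x => (Sum.inr (Sum.inr (Sum.inr (Sum.inr (Sum.inl (q5 x).1)))),
              Sum.inr (Sum.inr (Sum.inr (Sum.inr (Sum.inl (q5 x).2))))))
            (Sum.elim (fun x => (Sum.inr (Sum.inr (Sum.inr (Sum.inr (Sum.inr (Sum.inl (q6 x).1))))),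
                Sum.inr (Sum.inr (Sum.inr (Sum.inr (Sum.inr (Sum.inl (q6 x).2)))))))
              (fun x => (Sum.inr (Sum.inr (Sum.inr (Sum.inr (Sum.inr (Sum.inr (q7 x).1))))),
                Sum.inr (Sum.inr (Sum.inr (Sum.inr (Sum.inr (Sum.inr (q7 x).2))))))))))))

lemma dpair37_inj {A1 A2 A3 A4 A5 A6 A7 B1 B2 B3 B4 B5 B6 B7 : Type*}
    {q1 : B1 → A1 × A1} {q2 : B2 → A2 × A2} {q3 : B3 → A3 × A3} {q4 : B4 → A4 × A4}
    {q5 : B5 → A5 × A5} {q6 : B6 → A6 × A6} {q7 : B7 → A7 × A7}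
    (h1 : Function.Injective q1) (h2 : Function.Injective q2) (h3 : Function.Injective q3)
    (h4 : Function.Injective q4) (h5 : Function.Injective q5) (h6 : Function.Injective q6)
    (h7 : Function.Injective q7) :
    Function.Injective (dpair37 q1 q2 q3 q4 q5 q6 q7) := by
  rintro (x|x|x|x|x|x|x) (y|y|y|y|y|y|y) h <;>
    simp only [dpair37, Sum.elim_inl, Sum.elim_inr, Prod.mk.injEq, Sum.inl.injEq,
      Sum.inr.injEq, reduceCtorEq, false_and, and_false, and_self] at h
  · rw [h1 (Prod.ext h.1 h.2)]
  · rw [h2 (Prod.ext h.1 h.2)]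
  · rw [h3 (Prod.ext h.1 h.2)]
  · rw [h4 (Prod.ext h.1 h.2)]
  · rw [h5 (Prod.ext h.1 h.2)]
  · rw [h6 (Prod.ext h.1 h.2)]
  · rw [h7 (Prod.ext h.1 h.2)]

set_option maxHeartbeats 2000000 in
lemma final37 (tR L1 L2 L3 L4 L5 L6 L7 m P s1 s2 s3 s4 s5 s6 s7 sr q1 q2 q3 q4 q5 q6 q7 ar : ℝ)
    (hL1 : 0 ≤ L1) (hL2 : 0 ≤ L2) (hL3 : 0 ≤ L3) (hL4 : 0 ≤ L4) (hL5 : 0 ≤ L5)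
    (hL6 : 0 ≤ L6) (hL7 : 0 ≤ L7) (hmnn : 0 ≤ m)
    (hm : m = tR - (8*L1 + 5*L2 + 5*L3 + 4*L4 + 4*L5 + 3*L6 + 2*L7))
    (hD : 0 < 30*tR - 120*L1 - 100*L2 - 75*L3 - 72*L4 - 60*L5 - 45*L6 - 20*L7)
    (hs1 : 0 ≤ s1) (hs2 : 0 ≤ s2) (hs3 : 0 ≤ s3) (hs4 : 0 ≤ s4) (hs5 : 0 ≤ s5)
    (hs6 : 0 ≤ s6) (hs7 : 0 ≤ s7) (hsr : 0 ≤ sr)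
    (hq1 : 0 ≤ q1) (hq2 : 0 ≤ q2) (hq3 : 0 ≤ q3) (hq4 : 0 ≤ q4) (hq5 : 0 ≤ q5)
    (hq6 : 0 ≤ q6) (hq7 : 0 ≤ q7) (har : 0 ≤ ar)
    (hf1 : s1^2 ≤ 4*L1*q1) (hf2 : s2^2 ≤ 5/3*L2*q2) (hf3 : s3^2 ≤ 5/2*L3*q3)
    (hf4 : s4^2 ≤ 8/5*L4*q4) (hf5 : s5^2 ≤ 2*L5*q5) (hf6 : s6^2 ≤ 3/2*L6*q6)
    (hf7 : s7^2 ≤ 4/3*L7*q7) (hfr : sr^2 ≤ m*ar)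
    (hsum : (s1 + (s2 + (s3 + (s4 + (s5 + (s6 + s7)))))) + sr = 1)
    (hP : P ≤ 1 - ((q1 + (q2 + (q3 + (q4 + (q5 + (q6 + q7)))))) + ar)) :
    P ≤ 1 - 30 / (30*tR - 120*L1 - 100*L2 - 75*L3 - 72*L4 - 60*L5 - 45*L6 - 20*L7) := by
  have c1 : (0:ℝ) ≤ 4*L1 := by linarith
  have c2 : (0:ℝ) ≤ 5/3*L2 := by linarith
  have c3 : (0:ℝ) ≤ 5/2*L3 := by linarith
  have c4 : (0:ℝ) ≤ 8/5*L4 := by linarith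
  have c5 : (0:ℝ) ≤ 2*L5 := by linarith
  have c6 : (0:ℝ) ≤ 3/2*L6 := by linarith
  have c7 : (0:ℝ) ≤ 4/3*L7 := by linarith
  have e67 := engel37 hs6 hs7 c6 c7 hq6 hq7 hf6 hf7
  have e5 := engel37 hs5 (by linarith) c5 (by linarith) hq5 (by linarith) hf5 e67
  have e4 := engel37 hs4 (by linarith) c4 (by linarith) hq4 (by linarith) hf4 e5
  have e3 := engel37 hs3 (by linarith) c3 (by linarith) hq3 (by linarith) hf3 e4
  have e2 := engel37 hs2 (by linarith) c2 (by linarith) hq2 (by linarith) hf2 e3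
  have e1 := engel37 hs1 (by linarith) c1 (by linarith) hq1 (by linarith) hf1 e2
  have er := engel37 (by linarith : (0:ℝ) ≤ s1 + (s2 + (s3 + (s4 + (s5 + (s6 + s7)))))) hsr
    (by linarith) hmnn (by linarith) har e1 hfr
  rw [hsum] at er
  norm_num at er
  have hq : (0:ℝ) ≤ (q1 + (q2 + (q3 + (q4 + (q5 + (q6 + q7)))))) + ar := by linarith
  have hid : (30*tR - 120*L1 - 100*L2 - 75*L3 - 72*L4 - 60*L5 - 45*L6 - 20*L7) *
      ((q1 + (q2 + (q3 + (q4 + (q5 + (q6 + q7)))))) + ar)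
      = 30*((4*L1 + (5/3*L2 + (5/2*L3 + (8/5*L4 + (2*L5 + (3/2*L6 + 4/3*L7)))))) + m) *
        ((q1 + (q2 + (q3 + (q4 + (q5 + (q6 + q7)))))) + ar) := by
    rw [hm]; ring
  have h30 : 30 ≤ (30*tR - 120*L1 - 100*L2 - 75*L3 - 72*L4 - 60*L5 - 45*L6 - 20*L7) *
      ((q1 + (q2 + (q3 + (q4 + (q5 + (q6 + q7)))))) + ar) := by
    rw [hid]
    linarith [er]
  have hdiv : 30 / (30*tR - 120*L1 - 100*L2 - 75*L3 - 72*L4 - 60*L5 - 45*L6 - 20*L7) ≤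
      (q1 + (q2 + (q3 + (q4 + (q5 + (q6 + q7)))))) + ar := by
    rw [div_le_iff₀ hD]
    linarith [h30]
  linarith

set_option maxHeartbeats 8000000 in
set_option synthInstance.maxHeartbeats 400000 in
theorem aux37 (t l1 l2 l3 l4 l5 l6 l7 : ℕ) (ht : 1 ≤ t)
    (hsize : 8 * l1 + 5 * l2 + 5 * l3 + 4 * l4 + 4 * l5 + 3 * l6 + 2 * l7 ≤ t)
    (w : Fin t → Fin t → ℝ) (hsymm : ∀ i j, w i j = w j i)
    (hw : ∀ i j : Fin t, i ≠ j → 0 ≤ w i j ∧ w i j ≤ 1)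
    (p1 : Fin l1 → Fin 8 → Fin t) (p2 : Fin l2 → Fin 5 → Fin t) (p3 : Fin l3 → Fin 5 → Fin t)
    (p4 : Fin l4 → Fin 4 → Fin t) (p5 : Fin l5 → Fin 4 → Fin t) (p6 : Fin l6 → Fin 3 → Fin t)
    (p7 : Fin l7 → Fin 2 → Fin t)
    (hinj : Function.Injective (Sum.elim (fun x : Fin l1 × Fin 8 => p1 x.1 x.2)
      (Sum.elim (fun x : Fin l2 × Fin 5 => p2 x.1 x.2)
      (Sum.elim (fun x : Fin l3 × Fin 5 => p3 x.1 x.2)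
      (Sum.elim (fun x : Fin l4 × Fin 4 => p4 x.1 x.2)
      (Sum.elim (fun x : Fin l5 × Fin 4 => p5 x.1 x.2)
      (Sum.elim (fun x : Fin l6 × Fin 3 => p6 x.1 x.2)
        (fun x : Fin l7 × Fin 2 => p7 x.1 x.2))))))))
    (hC8 : ∀ a i, w (p1 a i) (p1 a (i+1)) = 1/2)
    (hK5 : ∀ a, ∀ i j, i ≠ j → w (p2 a i) (p2 a j) = 1/2)
    (hC5 : ∀ a i, w (p3 a i) (p3 a (i+1)) = 1/2)
    (hK4 : ∀ a, ∀ i j, i ≠ j → w (p4 a i) (p4 a j) = 1/2)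
    (hC4 : ∀ a i, w (p5 a i) (p5 a (i+1)) = 1/2)
    (hK3 : ∀ a, ∀ i j, i ≠ j → w (p6 a i) (p6 a j) = 1/2)
    (hM : ∀ e, w (p7 e 0) (p7 e 1) = 1/2)
    (u : Fin t → ℝ) (hu : ∀ i, 0 ≤ u i) (husum : ∑ i, u i = 1) :
    2 * (∑ i, ∑ j, if i < j then w i j * u i * u j else 0) ≤
      1 - 30 / (30 * (t : ℝ) - 120 * l1 - 100 * l2 - 75 * l3 - 72 * l4 - 60 * l5 -
        45 * l6 - 20 * l7) := by
  -- the combined vertex map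
  obtain ⟨cb, hcbinj, hcb1, hcb2, hcb3, hcb4, hcb5, hcb6, hcb7⟩ :
      ∃ cb : (Fin l1 × Fin 8) ⊕ ((Fin l2 × Fin 5) ⊕ ((Fin l3 × Fin 5) ⊕ ((Fin l4 × Fin 4) ⊕
          ((Fin l5 × Fin 4) ⊕ ((Fin l6 × Fin 3) ⊕ (Fin l7 × Fin 2)))))) → Fin t,
        Function.Injective cb ∧
        (∀ x : Fin l1 × Fin 8, cb (Sum.inl x) = p1 x.1 x.2) ∧
        (∀ x : Fin l2 × Fin 5, cb (Sum.inr (Sum.inl x)) = p2 x.1 x.2) ∧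
        (∀ x : Fin l3 × Fin 5, cb (Sum.inr (Sum.inr (Sum.inl x))) = p3 x.1 x.2) ∧
        (∀ x : Fin l4 × Fin 4, cb (Sum.inr (Sum.inr (Sum.inr (Sum.inl x)))) = p4 x.1 x.2) ∧
        (∀ x : Fin l5 × Fin 4, cb (Sum.inr (Sum.inr (Sum.inr (Sum.inr (Sum.inl x))))) = p5 x.1 x.2) ∧
        (∀ x : Fin l6 × Fin 3, cb (Sum.inr (Sum.inr (Sum.inr (Sum.inr (Sum.inr (Sum.inl x)))))) = p6 x.1 x.2) ∧
        (∀ x : Fin l7 × Fin 2, cb (Sum.inr (Sum.inr (Sum.inr (Sum.inr (Sum.inr (Sum.inr x)))))) = p7 x.1 x.2) :=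
    ⟨_, hinj, fun _ => rfl, fun _ => rfl, fun _ => rfl, fun _ => rfl, fun _ => rfl,
      fun _ => rfl, fun _ => rfl⟩
  -- injectivity of the individual structure maps
  have hp1 : ∀ a, Function.Injective (fun i => p1 a i) := fun a i j h => by
    have := hcbinj (a₁ := Sum.inl (a, i)) (a₂ := Sum.inl (a, j))
      (by rw [hcb1, hcb1]; exact h)
    simpa using this
  have hp2 : ∀ a, Function.Injective (fun i => p2 a i) := fun a i j h => by
    have := hcbinj (a₁ := Sum.inr (Sum.inl (a, i))) (a₂ := Sum.inr (Sum.inl (a, j)))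
      (by rw [hcb2, hcb2]; exact h)
    simpa using this
  have hp3 : ∀ a, Function.Injective (fun i => p3 a i) := fun a i j h => by
    have := hcbinj (a₁ := Sum.inr (Sum.inr (Sum.inl (a, i))))
      (a₂ := Sum.inr (Sum.inr (Sum.inl (a, j)))) (by rw [hcb3, hcb3]; exact h)
    simpa using this
  have hp4 : ∀ a, Function.Injective (fun i => p4 a i) := fun a i j h => by
    have := hcbinj (a₁ := Sum.inr (Sum.inr (Sum.inr (Sum.inl (a, i)))))
      (a₂ := Sum.inr (Sum.inr (Sum.inr (Sum.inl (a, j))))) (by rw [hcb4, hcb4]; exact h)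
    simpa using this
  have hp5 : ∀ a, Function.Injective (fun i => p5 a i) := fun a i j h => by
    have := hcbinj (a₁ := Sum.inr (Sum.inr (Sum.inr (Sum.inr (Sum.inl (a, i))))))
      (a₂ := Sum.inr (Sum.inr (Sum.inr (Sum.inr (Sum.inl (a, j)))))) (by rw [hcb5, hcb5]; exact h)
    simpa using this
  have hp6 : ∀ a, Function.Injective (fun i => p6 a i) := fun a i j h => by
    have := hcbinj (a₁ := Sum.inr (Sum.inr (Sum.inr (Sum.inr (Sum.inr (Sum.inl (a, i)))))))
      (a₂ := Sum.inr (Sum.inr (Sum.inr (Sum.inr (Sum.inr (Sum.inl (a, j)))))))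
      (by rw [hcb6, hcb6]; exact h)
    simpa using this
  have hp7 : ∀ a, Function.Injective (fun i => p7 a i) := fun a i j h => by
    have := hcbinj (a₁ := Sum.inr (Sum.inr (Sum.inr (Sum.inr (Sum.inr (Sum.inr (a, i)))))))
      (a₂ := Sum.inr (Sum.inr (Sum.inr (Sum.inr (Sum.inr (Sum.inr (a, j)))))))
      (by rw [hcb7, hcb7]; exact h)
    simpa using this
  -- the designated ordered-pair map
  obtain ⟨g, hginj, hg1, hg2, hg3, hg4, hg5, hg6, hg7⟩ :
      ∃ g : (Fin l1 × (Fin 8 × Bool)) ⊕ ((Fin l2 × {p : Fin 5 × Fin 5 // p.1 ≠ p.2}) ⊕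
          ((Fin l3 × (Fin 5 × Bool)) ⊕ ((Fin l4 × {p : Fin 4 × Fin 4 // p.1 ≠ p.2}) ⊕
          ((Fin l5 × (Fin 4 × Bool)) ⊕ ((Fin l6 × {p : Fin 3 × Fin 3 // p.1 ≠ p.2}) ⊕
          (Fin l7 × Bool)))))) → Fin t × Fin t,
        Function.Injective g ∧
        (∀ a d, g (Sum.inl (a, d)) = (p1 a (cycPair37 8 d).1, p1 a (cycPair37 8 d).2)) ∧
        (∀ a s, g (Sum.inr (Sum.inl (a, s))) = (p2 a s.val.1, p2 a s.val.2)) ∧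
        (∀ a d, g (Sum.inr (Sum.inr (Sum.inl (a, d)))) =
          (p3 a (cycPair37 5 d).1, p3 a (cycPair37 5 d).2)) ∧
        (∀ a s, g (Sum.inr (Sum.inr (Sum.inr (Sum.inl (a, s))))) = (p4 a s.val.1, p4 a s.val.2)) ∧
        (∀ a d, g (Sum.inr (Sum.inr (Sum.inr (Sum.inr (Sum.inl (a, d)))))) =
          (p5 a (cycPair37 4 d).1, p5 a (cycPair37 4 d).2)) ∧
        (∀ a s, g (Sum.inr (Sum.inr (Sum.inr (Sum.inr (Sum.inr (Sum.inl (a, s))))))) =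
          (p6 a s.val.1, p6 a s.val.2)) ∧
        (∀ e b, g (Sum.inr (Sum.inr (Sum.inr (Sum.inr (Sum.inr (Sum.inr (e, b))))))) =
          (p7 e (edgePair37 b).1, p7 e (edgePair37 b).2)) := by
    refine ⟨Prod.map cb cb ∘ dpair37 (wpair37 (cycPair37 8)) (wpair37 Subtype.val)
        (wpair37 (cycPair37 5)) (wpair37 Subtype.val) (wpair37 (cycPair37 4))
        (wpair37 Subtype.val) (wpair37 edgePair37),
      (hcbinj.prodMap hcbinj).comp (dpair37_inj (wpair37_inj cycPair37_inj8)
        (wpair37_inj Subtype.val_injective) (wpair37_inj cycPair37_inj5)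
        (wpair37_inj Subtype.val_injective) (wpair37_inj cycPair37_inj4)
        (wpair37_inj Subtype.val_injective) (wpair37_inj edgePair37_inj)),
      ?_, ?_, ?_, ?_, ?_, ?_, ?_⟩ <;>
    · intros
      simp only [Function.comp_apply, dpair37, wpair37, Sum.elim_inl, Sum.elim_inr,
        Prod.map_apply, hcb1, hcb2, hcb3, hcb4, hcb5, hcb6, hcb7]
  -- the slack function
  obtain ⟨F, hFdef⟩ : ∃ F : Fin t × Fin t → ℝ,
      F = fun p => if p.1 ≠ p.2 then (1 - w p.1 p.2) * (u p.1 * u p.2) else 0 := ⟨_, rfl⟩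
  have hFnn : ∀ p, 0 ≤ F p := by
    intro p
    rw [hFdef]
    dsimp only
    split_ifs with h
    · exact mul_nonneg (by linarith [(hw p.1 p.2 h).2]) (mul_nonneg (hu _) (hu _))
    · exact le_refl 0
  -- the injection bound
  have key1 : ∑ e, F (g e) ≤ ∑ p : Fin t × Fin t, F p := by
    have himg : ∑ p ∈ Finset.univ.image g, F p = ∑ e, F (g e) :=
      Finset.sum_image (fun x _ y _ h => hginj h)
    rw [← himg]
    exact Finset.sum_le_sum_of_subset_of_nonneg (Finset.subset_univ _) (fun p _ _ => hFnn p)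
  -- evaluation of the deficit sums
  have hD1 : ∑ x : Fin l1 × (Fin 8 × Bool), F (g (Sum.inl x)) =
      ∑ a, ∑ i, u (p1 a i) * u (p1 a (i+1)) := by
    rw [Fintype.sum_prod_type]
    refine Finset.sum_congr rfl fun a _ => ?_
    calc ∑ d : Fin 8 × Bool, F (g (Sum.inl (a, d)))
        = ∑ d : Fin 8 × Bool, F (p1 a (cycPair37 8 d).1, p1 a (cycPair37 8 d).2) :=
          Finset.sum_congr rfl fun d _ => by rw [hg1 a d]
      _ = ∑ i, u (p1 a i) * u (p1 a (i+1)) := by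
          simp only [hFdef]
          exact cycEval37 (by decide) w hsymm u (fun i => p1 a i) (hp1 a) (hC8 a)
  have hD2 : ∑ x : Fin l2 × {p : Fin 5 × Fin 5 // p.1 ≠ p.2}, F (g (Sum.inr (Sum.inl x))) =
      ∑ a, ∑ i, ∑ j, (if i ≠ j then (1/2) * (u (p2 a i) * u (p2 a j)) else 0) := by
    rw [Fintype.sum_prod_type]
    refine Finset.sum_congr rfl fun a _ => ?_
    calc ∑ s : {p : Fin 5 × Fin 5 // p.1 ≠ p.2}, F (g (Sum.inr (Sum.inl (a, s))))
        = ∑ s : {p : Fin 5 × Fin 5 // p.1 ≠ p.2}, F (p2 a s.val.1, p2 a s.val.2) :=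
          Finset.sum_congr rfl fun s _ => by rw [hg2 a s]
      _ = ∑ i, ∑ j, (if i ≠ j then (1/2) * (u (p2 a i) * u (p2 a j)) else 0) := by
          simp only [hFdef]
          exact clqEval37 w u (fun i => p2 a i) (hp2 a) (hK5 a)
  have hD3 : ∑ x : Fin l3 × (Fin 5 × Bool), F (g (Sum.inr (Sum.inr (Sum.inl x)))) =
      ∑ a, ∑ i, u (p3 a i) * u (p3 a (i+1)) := by
    rw [Fintype.sum_prod_type]
    refine Finset.sum_congr rfl fun a _ => ?_
    calc ∑ d : Fin 5 × Bool, F (g (Sum.inr (Sum.inr (Sum.inl (a, d)))))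
        = ∑ d : Fin 5 × Bool, F (p3 a (cycPair37 5 d).1, p3 a (cycPair37 5 d).2) :=
          Finset.sum_congr rfl fun d _ => by rw [hg3 a d]
      _ = ∑ i, u (p3 a i) * u (p3 a (i+1)) := by
          simp only [hFdef]
          exact cycEval37 (by decide) w hsymm u (fun i => p3 a i) (hp3 a) (hC5 a)
  have hD4 : ∑ x : Fin l4 × {p : Fin 4 × Fin 4 // p.1 ≠ p.2},
      F (g (Sum.inr (Sum.inr (Sum.inr (Sum.inl x))))) =
      ∑ a, ∑ i, ∑ j, (if i ≠ j then (1/2) * (u (p4 a i) * u (p4 a j)) else 0) := by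
    rw [Fintype.sum_prod_type]
    refine Finset.sum_congr rfl fun a _ => ?_
    calc ∑ s : {p : Fin 4 × Fin 4 // p.1 ≠ p.2}, F (g (Sum.inr (Sum.inr (Sum.inr (Sum.inl (a, s))))))
        = ∑ s : {p : Fin 4 × Fin 4 // p.1 ≠ p.2}, F (p4 a s.val.1, p4 a s.val.2) :=
          Finset.sum_congr rfl fun s _ => by rw [hg4 a s]
      _ = ∑ i, ∑ j, (if i ≠ j then (1/2) * (u (p4 a i) * u (p4 a j)) else 0) := by
          simp only [hFdef]
          exact clqEval37 w u (fun i => p4 a i) (hp4 a) (hK4 a)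
  have hD5 : ∑ x : Fin l5 × (Fin 4 × Bool), F (g (Sum.inr (Sum.inr (Sum.inr (Sum.inr (Sum.inl x)))))) =
      ∑ a, ∑ i, u (p5 a i) * u (p5 a (i+1)) := by
    rw [Fintype.sum_prod_type]
    refine Finset.sum_congr rfl fun a _ => ?_
    calc ∑ d : Fin 4 × Bool, F (g (Sum.inr (Sum.inr (Sum.inr (Sum.inr (Sum.inl (a, d)))))))
        = ∑ d : Fin 4 × Bool, F (p5 a (cycPair37 4 d).1, p5 a (cycPair37 4 d).2) :=
          Finset.sum_congr rfl fun d _ => by rw [hg5 a d]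
      _ = ∑ i, u (p5 a i) * u (p5 a (i+1)) := by
          simp only [hFdef]
          exact cycEval37 (by decide) w hsymm u (fun i => p5 a i) (hp5 a) (hC4 a)
  have hD6 : ∑ x : Fin l6 × {p : Fin 3 × Fin 3 // p.1 ≠ p.2},
      F (g (Sum.inr (Sum.inr (Sum.inr (Sum.inr (Sum.inr (Sum.inl x))))))) =
      ∑ a, ∑ i, ∑ j, (if i ≠ j then (1/2) * (u (p6 a i) * u (p6 a j)) else 0) := by
    rw [Fintype.sum_prod_type]
    refine Finset.sum_congr rfl fun a _ => ?_
    calc ∑ s : {p : Fin 3 × Fin 3 // p.1 ≠ p.2},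
        F (g (Sum.inr (Sum.inr (Sum.inr (Sum.inr (Sum.inr (Sum.inl (a, s))))))))
        = ∑ s : {p : Fin 3 × Fin 3 // p.1 ≠ p.2}, F (p6 a s.val.1, p6 a s.val.2) :=
          Finset.sum_congr rfl fun s _ => by rw [hg6 a s]
      _ = ∑ i, ∑ j, (if i ≠ j then (1/2) * (u (p6 a i) * u (p6 a j)) else 0) := by
          simp only [hFdef]
          exact clqEval37 w u (fun i => p6 a i) (hp6 a) (hK3 a)
  have hD7 : ∑ x : Fin l7 × Bool,
      F (g (Sum.inr (Sum.inr (Sum.inr (Sum.inr (Sum.inr (Sum.inr x))))))) =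
      ∑ e, u (p7 e 0) * u (p7 e 1) := by
    rw [Fintype.sum_prod_type]
    refine Finset.sum_congr rfl fun e _ => ?_
    calc ∑ b : Bool, F (g (Sum.inr (Sum.inr (Sum.inr (Sum.inr (Sum.inr (Sum.inr (e, b))))))))
        = ∑ b : Bool, F (p7 e (edgePair37 b).1, p7 e (edgePair37 b).2) :=
          Finset.sum_congr rfl fun b _ => by rw [hg7 e b]
      _ = u (p7 e 0) * u (p7 e 1) := by
          simp only [hFdef]
          exact edgEval37 w hsymm u (fun i => p7 e i) (hp7 e) (hM e)
  have key2 : ∑ e, F (g e) =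
      (∑ a, ∑ i, u (p1 a i) * u (p1 a (i+1))) +
      ((∑ a, ∑ i, ∑ j, (if i ≠ j then (1/2) * (u (p2 a i) * u (p2 a j)) else 0)) +
      ((∑ a, ∑ i, u (p3 a i) * u (p3 a (i+1))) +
      ((∑ a, ∑ i, ∑ j, (if i ≠ j then (1/2) * (u (p4 a i) * u (p4 a j)) else 0)) +
      ((∑ a, ∑ i, u (p5 a i) * u (p5 a (i+1))) +
      ((∑ a, ∑ i, ∑ j, (if i ≠ j then (1/2) * (u (p6 a i) * u (p6 a j)) else 0)) +
      (∑ e, u (p7 e 0) * u (p7 e 1))))))) := by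
    rw [Fintype.sum_sum_type, Fintype.sum_sum_type, Fintype.sum_sum_type, Fintype.sum_sum_type,
      Fintype.sum_sum_type, Fintype.sum_sum_type, hD1, hD2, hD3, hD4, hD5, hD6, hD7]
  -- symmetrization
  have h2S : ∑ i, ∑ j, (if i ≠ j then w i j * (u i * u j) else 0)
      = 2 * (∑ i, ∑ j, if i < j then w i j * u i * u j else 0) := by
    have hpt : ∀ i j : Fin t, (if i ≠ j then w i j * (u i * u j) else 0) =
        (if i < j then w i j * u i * u j else 0) + (if j < i then w i j * u i * u j else 0) := by
      intro i j
      rcases lt_trichotomy i j with h|h|h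
      · rw [if_pos h.ne, if_pos h, if_neg (by omega), add_zero]; ring
      · subst h; simp
      · rw [if_pos h.ne', if_neg (by omega), if_pos h, zero_add]; ring
    have hBA : ∑ i, ∑ j, (if j < i then w i j * u i * u j else 0)
        = ∑ i, ∑ j, (if i < j then w i j * u i * u j else 0) := by
      rw [Finset.sum_comm]
      refine Finset.sum_congr rfl fun j _ => Finset.sum_congr rfl fun i _ => ?_
      split_ifs with h
      · rw [hsymm]; ring
      · rfl
    calc ∑ i, ∑ j, (if i ≠ j then w i j * (u i * u j) else 0)
        = ∑ i, ((∑ j, (if i < j then w i j * u i * u j else 0)) +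
            ∑ j, (if j < i then w i j * u i * u j else 0)) := by
          refine Finset.sum_congr rfl fun i _ => ?_
          rw [← Finset.sum_add_distrib]
          exact Finset.sum_congr rfl fun j _ => hpt i j
      _ = (∑ i, ∑ j, (if i < j then w i j * u i * u j else 0)) +
            ∑ i, ∑ j, (if j < i then w i j * u i * u j else 0) := Finset.sum_add_distrib
      _ = 2 * (∑ i, ∑ j, if i < j then w i j * u i * u j else 0) := by rw [hBA]; ring
  -- the all-ones comparison
  have hA : ∑ i, ∑ j, (if i ≠ j then u i * u j else 0) = 1 - ∑ i, (u i)^2 := by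
    have h1 : (1:ℝ) = ∑ i, ∑ j, u i * u j := by
      calc (1:ℝ) = (∑ i, u i) * (∑ j, u j) := by rw [husum]; ring
        _ = ∑ i, ∑ j, u i * u j := Finset.sum_mul_sum _ _ _ _
    have h2 : ∀ i, ∑ j, u i * u j = (u i)^2 + ∑ j, (if i ≠ j then u i * u j else 0) := by
      intro i
      have hd : ∑ j, (if i = j then u i * u j else 0) = u i * u i := by
        rw [Finset.sum_ite_eq]; simp
      calc ∑ j, u i * u j
          = ∑ j, ((if i = j then u i * u j else 0) + (if i ≠ j then u i * u j else 0)) :=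
            Finset.sum_congr rfl fun j _ => by by_cases h : i = j <;> simp [h]
        _ = (u i)^2 + ∑ j, (if i ≠ j then u i * u j else 0) := by
            rw [Finset.sum_add_distrib, hd, sq]
    calc ∑ i, ∑ j, (if i ≠ j then u i * u j else 0)
        = ∑ i, ((∑ j, u i * u j) - (u i)^2) :=
          Finset.sum_congr rfl fun i _ => by rw [h2 i]; ring
      _ = (∑ i, ∑ j, u i * u j) - ∑ i, (u i)^2 := Finset.sum_sub_distrib _ _
      _ = 1 - ∑ i, (u i)^2 := by rw [← h1]
  have hwF : ∑ i, ∑ j, (if i ≠ j then w i j * (u i * u j) else 0)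
      = (1 - ∑ i, (u i)^2) - ∑ p : Fin t × Fin t, F p := by
    have hpt : ∀ i j : Fin t, (if i ≠ j then w i j * (u i * u j) else 0)
        = (if i ≠ j then u i * u j else 0) - F (i, j) := by
      intro i j
      rw [hFdef]
      dsimp only
      split_ifs <;> ring
    calc ∑ i, ∑ j, (if i ≠ j then w i j * (u i * u j) else 0)
        = ∑ i, ((∑ j, (if i ≠ j then u i * u j else 0)) - ∑ j, F (i, j)) := by
          refine Finset.sum_congr rfl fun i _ => ?_
          rw [← Finset.sum_sub_distrib]
          exact Finset.sum_congr rfl fun j _ => hpt i j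
      _ = (∑ i, ∑ j, (if i ≠ j then u i * u j else 0)) - ∑ i, ∑ j, F (i, j) :=
          Finset.sum_sub_distrib _ _
      _ = (1 - ∑ i, (u i)^2) - ∑ p : Fin t × Fin t, F p := by
          rw [hA, ← Fintype.sum_prod_type]
  -- splitting a sum over the vertex set
  have hsplitfun : ∀ h : Fin t → ℝ,
      ∑ i, h i = ((∑ a, ∑ i, h (p1 a i)) + ((∑ a, ∑ i, h (p2 a i)) + ((∑ a, ∑ i, h (p3 a i)) +
        ((∑ a, ∑ i, h (p4 a i)) + ((∑ a, ∑ i, h (p5 a i)) + ((∑ a, ∑ i, h (p6 a i)) +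
        (∑ e, ∑ i, h (p7 e i)))))))) + ∑ i ∈ (Finset.univ.image cb)ᶜ, h i := by
    intro h
    rw [← Finset.sum_add_sum_compl (Finset.univ.image cb) h]
    congr 1
    rw [Finset.sum_image (fun x _ y _ hxy => hcbinj hxy)]
    rw [Fintype.sum_sum_type, Fintype.sum_sum_type, Fintype.sum_sum_type, Fintype.sum_sum_type,
      Fintype.sum_sum_type, Fintype.sum_sum_type]
    simp only [hcb1, hcb2, hcb3, hcb4, hcb5, hcb6, hcb7]
    rw [Fintype.sum_prod_type, Fintype.sum_prod_type, Fintype.sum_prod_type,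
      Fintype.sum_prod_type, Fintype.sum_prod_type, Fintype.sum_prod_type, Fintype.sum_prod_type]
  -- cardinality of the leftover set
  have hcardn : (Finset.univ.image cb)ᶜ.card
      = t - (8 * l1 + 5 * l2 + 5 * l3 + 4 * l4 + 4 * l5 + 3 * l6 + 2 * l7) := by
    rw [Finset.card_compl, Finset.card_image_of_injective _ hcbinj]
    simp only [Finset.card_univ, Fintype.card_sum, Fintype.card_prod, Fintype.card_fin]
    omega
  have hm : (((Finset.univ.image cb)ᶜ.card : ℕ) : ℝ)
      = (t:ℝ) - (8*(l1:ℝ) + 5*(l2:ℝ) + 5*(l3:ℝ) + 4*(l4:ℝ) + 4*(l5:ℝ) + 3*(l6:ℝ) + 2*(l7:ℝ)) := by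
    rw [hcardn, Nat.cast_sub hsize]
    push_cast
    ring
  -- positivity of the denominator
  have hD : (0:ℝ) < 30*(t:ℝ) - 120*(l1:ℝ) - 100*(l2:ℝ) - 75*(l3:ℝ) - 72*(l4:ℝ) - 60*(l5:ℝ) -
      45*(l6:ℝ) - 20*(l7:ℝ) := by
    rcases Nat.eq_zero_or_pos (l1+l2+l3+l4+l5+l6+l7) with h0|hpos
    · obtain ⟨e1,e2,e3,e4,e5,e6,e7⟩ : l1 = 0 ∧ l2 = 0 ∧ l3 = 0 ∧ l4 = 0 ∧ l5 = 0 ∧ l6 = 0 ∧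
        l7 = 0 := by omega
      subst e1; subst e2; subst e3; subst e4; subst e5; subst e6; subst e7
      have h1 : (1:ℝ) ≤ t := by exact_mod_cast ht
      simp only [Nat.cast_zero]
      linarith
    · have hp : (1:ℝ) ≤ (l1:ℝ)+(l2:ℝ)+(l3:ℝ)+(l4:ℝ)+(l5:ℝ)+(l6:ℝ)+(l7:ℝ) := by
        exact_mod_cast hpos
      have hs : (8*(l1:ℝ) + 5*(l2:ℝ) + 5*(l3:ℝ) + 4*(l4:ℝ) + 4*(l5:ℝ) + 3*(l6:ℝ) + 2*(l7:ℝ)) ≤ (t:ℝ) := by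
        exact_mod_cast hsize
      have c1 : (0:ℝ) ≤ l1 := Nat.cast_nonneg _
      have c2 : (0:ℝ) ≤ l2 := Nat.cast_nonneg _
      have c3 : (0:ℝ) ≤ l3 := Nat.cast_nonneg _
      have c4 : (0:ℝ) ≤ l4 := Nat.cast_nonneg _
      have c5 : (0:ℝ) ≤ l5 := Nat.cast_nonneg _
      have c6 : (0:ℝ) ≤ l6 := Nat.cast_nonneg _
      have c7 : (0:ℝ) ≤ l7 := Nat.cast_nonneg _
      linarith
  -- family bounds
  have hf1 : (∑ a, ∑ i, u (p1 a i))^2 ≤ 4*(l1:ℝ) *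
      ((∑ a, ∑ i, (u (p1 a i))^2) + ∑ a, ∑ i, u (p1 a i) * u (p1 a (i+1))) := by
    have hstep : ∀ a, (∑ i, u (p1 a i))^2 ≤
        4 * ((∑ i, (u (p1 a i))^2) + ∑ i, u (p1 a i) * u (p1 a (i+1))) := by
      intro a
      have h := cyc37 (n := 8) (fun i => u (p1 a i))
      push_cast at h
      linarith
    have hcs : (∑ a, ∑ i, u (p1 a i))^2 ≤ (l1:ℝ) * ∑ a, (∑ i, u (p1 a i))^2 := by
      simpa using sq_sum_le_card_mul_sum_sq (s := (Finset.univ : Finset (Fin l1)))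
        (f := fun a => ∑ i, u (p1 a i))
    calc (∑ a, ∑ i, u (p1 a i))^2 ≤ (l1:ℝ) * ∑ a, (∑ i, u (p1 a i))^2 := hcs
      _ ≤ (l1:ℝ) * ∑ a, 4 * ((∑ i, (u (p1 a i))^2) + ∑ i, u (p1 a i) * u (p1 a (i+1))) :=
          mul_le_mul_of_nonneg_left (Finset.sum_le_sum fun a _ => hstep a) (Nat.cast_nonneg l1)
      _ = 4*(l1:ℝ) * ((∑ a, ∑ i, (u (p1 a i))^2) + ∑ a, ∑ i, u (p1 a i) * u (p1 a (i+1))) := by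
          rw [← Finset.mul_sum, Finset.sum_add_distrib]
          ring
  have hf2 : (∑ a, ∑ i, u (p2 a i))^2 ≤ 5/3*(l2:ℝ) *
      ((∑ a, ∑ i, (u (p2 a i))^2) +
        ∑ a, ∑ i, ∑ j, (if i ≠ j then (1/2) * (u (p2 a i) * u (p2 a j)) else 0)) := by
    have hstep : ∀ a, (∑ i, u (p2 a i))^2 ≤ 5/3 * ((∑ i, (u (p2 a i))^2) +
        ∑ i, ∑ j, (if i ≠ j then (1/2) * (u (p2 a i) * u (p2 a j)) else 0)) := by
      intro a
      have h := clique37 (n := 5) (by norm_num) (fun i => u (p2 a i))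
      push_cast at h
      linarith
    have hcs : (∑ a, ∑ i, u (p2 a i))^2 ≤ (l2:ℝ) * ∑ a, (∑ i, u (p2 a i))^2 := by
      simpa using sq_sum_le_card_mul_sum_sq (s := (Finset.univ : Finset (Fin l2)))
        (f := fun a => ∑ i, u (p2 a i))
    calc (∑ a, ∑ i, u (p2 a i))^2 ≤ (l2:ℝ) * ∑ a, (∑ i, u (p2 a i))^2 := hcs
      _ ≤ (l2:ℝ) * ∑ a, 5/3 * ((∑ i, (u (p2 a i))^2) +
            ∑ i, ∑ j, (if i ≠ j then (1/2) * (u (p2 a i) * u (p2 a j)) else 0)) :=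
          mul_le_mul_of_nonneg_left (Finset.sum_le_sum fun a _ => hstep a) (Nat.cast_nonneg l2)
      _ = 5/3*(l2:ℝ) * ((∑ a, ∑ i, (u (p2 a i))^2) +
            ∑ a, ∑ i, ∑ j, (if i ≠ j then (1/2) * (u (p2 a i) * u (p2 a j)) else 0)) := by
          rw [← Finset.mul_sum, Finset.sum_add_distrib]
          ring
  have hf3 : (∑ a, ∑ i, u (p3 a i))^2 ≤ 5/2*(l3:ℝ) *
      ((∑ a, ∑ i, (u (p3 a i))^2) + ∑ a, ∑ i, u (p3 a i) * u (p3 a (i+1))) := by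
    have hstep : ∀ a, (∑ i, u (p3 a i))^2 ≤
        5/2 * ((∑ i, (u (p3 a i))^2) + ∑ i, u (p3 a i) * u (p3 a (i+1))) := by
      intro a
      have h := cyc37 (n := 5) (fun i => u (p3 a i))
      push_cast at h
      linarith
    have hcs : (∑ a, ∑ i, u (p3 a i))^2 ≤ (l3:ℝ) * ∑ a, (∑ i, u (p3 a i))^2 := by
      simpa using sq_sum_le_card_mul_sum_sq (s := (Finset.univ : Finset (Fin l3)))
        (f := fun a => ∑ i, u (p3 a i))
    calc (∑ a, ∑ i, u (p3 a i))^2 ≤ (l3:ℝ) * ∑ a, (∑ i, u (p3 a i))^2 := hcs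
      _ ≤ (l3:ℝ) * ∑ a, 5/2 * ((∑ i, (u (p3 a i))^2) + ∑ i, u (p3 a i) * u (p3 a (i+1))) :=
          mul_le_mul_of_nonneg_left (Finset.sum_le_sum fun a _ => hstep a) (Nat.cast_nonneg l3)
      _ = 5/2*(l3:ℝ) * ((∑ a, ∑ i, (u (p3 a i))^2) + ∑ a, ∑ i, u (p3 a i) * u (p3 a (i+1))) := by
          rw [← Finset.mul_sum, Finset.sum_add_distrib]
          ring
  have hf4 : (∑ a, ∑ i, u (p4 a i))^2 ≤ 8/5*(l4:ℝ) *
      ((∑ a, ∑ i, (u (p4 a i))^2) +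
        ∑ a, ∑ i, ∑ j, (if i ≠ j then (1/2) * (u (p4 a i) * u (p4 a j)) else 0)) := by
    have hstep : ∀ a, (∑ i, u (p4 a i))^2 ≤ 8/5 * ((∑ i, (u (p4 a i))^2) +
        ∑ i, ∑ j, (if i ≠ j then (1/2) * (u (p4 a i) * u (p4 a j)) else 0)) := by
      intro a
      have h := clique37 (n := 4) (by norm_num) (fun i => u (p4 a i))
      push_cast at h
      linarith
    have hcs : (∑ a, ∑ i, u (p4 a i))^2 ≤ (l4:ℝ) * ∑ a, (∑ i, u (p4 a i))^2 := by
      simpa using sq_sum_le_card_mul_sum_sq (s := (Finset.univ : Finset (Fin l4)))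
        (f := fun a => ∑ i, u (p4 a i))
    calc (∑ a, ∑ i, u (p4 a i))^2 ≤ (l4:ℝ) * ∑ a, (∑ i, u (p4 a i))^2 := hcs
      _ ≤ (l4:ℝ) * ∑ a, 8/5 * ((∑ i, (u (p4 a i))^2) +
            ∑ i, ∑ j, (if i ≠ j then (1/2) * (u (p4 a i) * u (p4 a j)) else 0)) :=
          mul_le_mul_of_nonneg_left (Finset.sum_le_sum fun a _ => hstep a) (Nat.cast_nonneg l4)
      _ = 8/5*(l4:ℝ) * ((∑ a, ∑ i, (u (p4 a i))^2) +
            ∑ a, ∑ i, ∑ j, (if i ≠ j then (1/2) * (u (p4 a i) * u (p4 a j)) else 0)) := by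
          rw [← Finset.mul_sum, Finset.sum_add_distrib]
          ring
  have hf5 : (∑ a, ∑ i, u (p5 a i))^2 ≤ 2*(l5:ℝ) *
      ((∑ a, ∑ i, (u (p5 a i))^2) + ∑ a, ∑ i, u (p5 a i) * u (p5 a (i+1))) := by
    have hstep : ∀ a, (∑ i, u (p5 a i))^2 ≤
        2 * ((∑ i, (u (p5 a i))^2) + ∑ i, u (p5 a i) * u (p5 a (i+1))) := by
      intro a
      have h := cyc37 (n := 4) (fun i => u (p5 a i))
      push_cast at h
      linarith
    have hcs : (∑ a, ∑ i, u (p5 a i))^2 ≤ (l5:ℝ) * ∑ a, (∑ i, u (p5 a i))^2 := by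
      simpa using sq_sum_le_card_mul_sum_sq (s := (Finset.univ : Finset (Fin l5)))
        (f := fun a => ∑ i, u (p5 a i))
    calc (∑ a, ∑ i, u (p5 a i))^2 ≤ (l5:ℝ) * ∑ a, (∑ i, u (p5 a i))^2 := hcs
      _ ≤ (l5:ℝ) * ∑ a, 2 * ((∑ i, (u (p5 a i))^2) + ∑ i, u (p5 a i) * u (p5 a (i+1))) :=
          mul_le_mul_of_nonneg_left (Finset.sum_le_sum fun a _ => hstep a) (Nat.cast_nonneg l5)
      _ = 2*(l5:ℝ) * ((∑ a, ∑ i, (u (p5 a i))^2) + ∑ a, ∑ i, u (p5 a i) * u (p5 a (i+1))) := by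
          rw [← Finset.mul_sum, Finset.sum_add_distrib]
          ring
  have hf6 : (∑ a, ∑ i, u (p6 a i))^2 ≤ 3/2*(l6:ℝ) *
      ((∑ a, ∑ i, (u (p6 a i))^2) +
        ∑ a, ∑ i, ∑ j, (if i ≠ j then (1/2) * (u (p6 a i) * u (p6 a j)) else 0)) := by
    have hstep : ∀ a, (∑ i, u (p6 a i))^2 ≤ 3/2 * ((∑ i, (u (p6 a i))^2) +
        ∑ i, ∑ j, (if i ≠ j then (1/2) * (u (p6 a i) * u (p6 a j)) else 0)) := by
      intro a
      have h := clique37 (n := 3) (by norm_num) (fun i => u (p6 a i))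
      push_cast at h
      linarith
    have hcs : (∑ a, ∑ i, u (p6 a i))^2 ≤ (l6:ℝ) * ∑ a, (∑ i, u (p6 a i))^2 := by
      simpa using sq_sum_le_card_mul_sum_sq (s := (Finset.univ : Finset (Fin l6)))
        (f := fun a => ∑ i, u (p6 a i))
    calc (∑ a, ∑ i, u (p6 a i))^2 ≤ (l6:ℝ) * ∑ a, (∑ i, u (p6 a i))^2 := hcs
      _ ≤ (l6:ℝ) * ∑ a, 3/2 * ((∑ i, (u (p6 a i))^2) +
            ∑ i, ∑ j, (if i ≠ j then (1/2) * (u (p6 a i) * u (p6 a j)) else 0)) :=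
          mul_le_mul_of_nonneg_left (Finset.sum_le_sum fun a _ => hstep a) (Nat.cast_nonneg l6)
      _ = 3/2*(l6:ℝ) * ((∑ a, ∑ i, (u (p6 a i))^2) +
            ∑ a, ∑ i, ∑ j, (if i ≠ j then (1/2) * (u (p6 a i) * u (p6 a j)) else 0)) := by
          rw [← Finset.mul_sum, Finset.sum_add_distrib]
          ring
  have hf7 : (∑ e, ∑ i, u (p7 e i))^2 ≤ 4/3*(l7:ℝ) *
      ((∑ e, ∑ i, (u (p7 e i))^2) + ∑ e, u (p7 e 0) * u (p7 e 1)) := by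
    have hstep : ∀ e, (∑ i, u (p7 e i))^2 ≤
        4/3 * ((∑ i, (u (p7 e i))^2) + u (p7 e 0) * u (p7 e 1)) := by
      intro e
      have e1 : ∑ i, u (p7 e i) = u (p7 e 0) + u (p7 e 1) := Fin.sum_univ_two _
      have e2 : ∑ i, (u (p7 e i))^2 = (u (p7 e 0))^2 + (u (p7 e 1))^2 := Fin.sum_univ_two _
      rw [e1, e2]
      nlinarith [sq_nonneg (u (p7 e 0) - u (p7 e 1))]
    have hcs : (∑ e, ∑ i, u (p7 e i))^2 ≤ (l7:ℝ) * ∑ e, (∑ i, u (p7 e i))^2 := by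
      simpa using sq_sum_le_card_mul_sum_sq (s := (Finset.univ : Finset (Fin l7)))
        (f := fun e => ∑ i, u (p7 e i))
    calc (∑ e, ∑ i, u (p7 e i))^2 ≤ (l7:ℝ) * ∑ e, (∑ i, u (p7 e i))^2 := hcs
      _ ≤ (l7:ℝ) * ∑ e, 4/3 * ((∑ i, (u (p7 e i))^2) + u (p7 e 0) * u (p7 e 1)) :=
          mul_le_mul_of_nonneg_left (Finset.sum_le_sum fun e _ => hstep e) (Nat.cast_nonneg l7)
      _ = 4/3*(l7:ℝ) * ((∑ e, ∑ i, (u (p7 e i))^2) + ∑ e, u (p7 e 0) * u (p7 e 1)) := by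
          rw [← Finset.mul_sum, Finset.sum_add_distrib]
          ring
  -- nonnegativity facts
  have husq : ∀ i : Fin t, 0 ≤ (u i)^2 := fun i => sq_nonneg _
  have hs1 : 0 ≤ ∑ a, ∑ i, u (p1 a i) :=
    Finset.sum_nonneg fun a _ => Finset.sum_nonneg fun i _ => hu _
  have hs2 : 0 ≤ ∑ a, ∑ i, u (p2 a i) :=
    Finset.sum_nonneg fun a _ => Finset.sum_nonneg fun i _ => hu _
  have hs3 : 0 ≤ ∑ a, ∑ i, u (p3 a i) :=
    Finset.sum_nonneg fun a _ => Finset.sum_nonneg fun i _ => hu _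
  have hs4 : 0 ≤ ∑ a, ∑ i, u (p4 a i) :=
    Finset.sum_nonneg fun a _ => Finset.sum_nonneg fun i _ => hu _
  have hs5 : 0 ≤ ∑ a, ∑ i, u (p5 a i) :=
    Finset.sum_nonneg fun a _ => Finset.sum_nonneg fun i _ => hu _
  have hs6 : 0 ≤ ∑ a, ∑ i, u (p6 a i) :=
    Finset.sum_nonneg fun a _ => Finset.sum_nonneg fun i _ => hu _
  have hs7 : 0 ≤ ∑ e, ∑ i, u (p7 e i) :=
    Finset.sum_nonneg fun e _ => Finset.sum_nonneg fun i _ => hu _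
  have hsr : 0 ≤ ∑ i ∈ (Finset.univ.image cb)ᶜ, u i :=
    Finset.sum_nonneg fun i _ => hu _
  have hcyc1 : 0 ≤ ∑ a, ∑ i, u (p1 a i) * u (p1 a (i+1)) :=
    Finset.sum_nonneg fun a _ => Finset.sum_nonneg fun i _ => mul_nonneg (hu _) (hu _)
  have hcyc3 : 0 ≤ ∑ a, ∑ i, u (p3 a i) * u (p3 a (i+1)) :=
    Finset.sum_nonneg fun a _ => Finset.sum_nonneg fun i _ => mul_nonneg (hu _) (hu _)
  have hcyc5 : 0 ≤ ∑ a, ∑ i, u (p5 a i) * u (p5 a (i+1)) :=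
    Finset.sum_nonneg fun a _ => Finset.sum_nonneg fun i _ => mul_nonneg (hu _) (hu _)
  have hcyc7 : 0 ≤ ∑ e, u (p7 e 0) * u (p7 e 1) :=
    Finset.sum_nonneg fun e _ => mul_nonneg (hu _) (hu _)
  have hclq2 : 0 ≤ ∑ a, ∑ i, ∑ j, (if i ≠ j then (1/2) * (u (p2 a i) * u (p2 a j)) else 0) :=
    Finset.sum_nonneg fun a _ => Finset.sum_nonneg fun i _ => Finset.sum_nonneg fun j _ => by
      split_ifs
      · exact mul_nonneg (by norm_num) (mul_nonneg (hu _) (hu _))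
      · exact le_refl 0
  have hclq4 : 0 ≤ ∑ a, ∑ i, ∑ j, (if i ≠ j then (1/2) * (u (p4 a i) * u (p4 a j)) else 0) :=
    Finset.sum_nonneg fun a _ => Finset.sum_nonneg fun i _ => Finset.sum_nonneg fun j _ => by
      split_ifs
      · exact mul_nonneg (by norm_num) (mul_nonneg (hu _) (hu _))
      · exact le_refl 0
  have hclq6 : 0 ≤ ∑ a, ∑ i, ∑ j, (if i ≠ j then (1/2) * (u (p6 a i) * u (p6 a j)) else 0) :=
    Finset.sum_nonneg fun a _ => Finset.sum_nonneg fun i _ => Finset.sum_nonneg fun j _ => by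
      split_ifs
      · exact mul_nonneg (by norm_num) (mul_nonneg (hu _) (hu _))
      · exact le_refl 0
  have ha1 : 0 ≤ ∑ a, ∑ i, (u (p1 a i))^2 :=
    Finset.sum_nonneg fun a _ => Finset.sum_nonneg fun i _ => husq _
  have ha2 : 0 ≤ ∑ a, ∑ i, (u (p2 a i))^2 :=
    Finset.sum_nonneg fun a _ => Finset.sum_nonneg fun i _ => husq _
  have ha3 : 0 ≤ ∑ a, ∑ i, (u (p3 a i))^2 :=
    Finset.sum_nonneg fun a _ => Finset.sum_nonneg fun i _ => husq _
  have ha4 : 0 ≤ ∑ a, ∑ i, (u (p4 a i))^2 :=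
    Finset.sum_nonneg fun a _ => Finset.sum_nonneg fun i _ => husq _
  have ha5 : 0 ≤ ∑ a, ∑ i, (u (p5 a i))^2 :=
    Finset.sum_nonneg fun a _ => Finset.sum_nonneg fun i _ => husq _
  have ha6 : 0 ≤ ∑ a, ∑ i, (u (p6 a i))^2 :=
    Finset.sum_nonneg fun a _ => Finset.sum_nonneg fun i _ => husq _
  have ha7 : 0 ≤ ∑ e, ∑ i, (u (p7 e i))^2 :=
    Finset.sum_nonneg fun e _ => Finset.sum_nonneg fun i _ => husq _
  have har : 0 ≤ ∑ i ∈ (Finset.univ.image cb)ᶜ, (u i)^2 :=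
    Finset.sum_nonneg fun i _ => husq _
  -- the rest bound
  have hfr : (∑ i ∈ (Finset.univ.image cb)ᶜ, u i)^2 ≤
      (((Finset.univ.image cb)ᶜ.card : ℕ) : ℝ) * ∑ i ∈ (Finset.univ.image cb)ᶜ, (u i)^2 := by
    exact sq_sum_le_card_mul_sum_sq
  -- the vertex sum splits
  have hsu : ((∑ a, ∑ i, u (p1 a i)) + ((∑ a, ∑ i, u (p2 a i)) + ((∑ a, ∑ i, u (p3 a i)) +
      ((∑ a, ∑ i, u (p4 a i)) + ((∑ a, ∑ i, u (p5 a i)) + ((∑ a, ∑ i, u (p6 a i)) +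
      (∑ e, ∑ i, u (p7 e i)))))))) + ∑ i ∈ (Finset.univ.image cb)ᶜ, u i = 1 := by
    rw [← hsplitfun u, husum]
  have hsq2 : ∑ i, (u i)^2 = ((∑ a, ∑ i, (u (p1 a i))^2) + ((∑ a, ∑ i, (u (p2 a i))^2) +
      ((∑ a, ∑ i, (u (p3 a i))^2) + ((∑ a, ∑ i, (u (p4 a i))^2) + ((∑ a, ∑ i, (u (p5 a i))^2) +
      ((∑ a, ∑ i, (u (p6 a i))^2) + (∑ e, ∑ i, (u (p7 e i))^2))))))) +
      ∑ i ∈ (Finset.univ.image cb)ᶜ, (u i)^2 := by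
    have h := hsplitfun (fun i => (u i)^2)
    exact h
  -- the target bound before the Engel step
  have hP : 2 * (∑ i, ∑ j, if i < j then w i j * u i * u j else 0) ≤
      1 - ((((∑ a, ∑ i, (u (p1 a i))^2) + (∑ a, ∑ i, u (p1 a i) * u (p1 a (i+1)))) + (((∑ a, ∑ i, (u (p2 a i))^2) + (∑ a, ∑ i, ∑ j, (if i ≠ j then (1/2) * (u (p2 a i) * u (p2 a j)) else 0))) + (((∑ a, ∑ i, (u (p3 a i))^2) + (∑ a, ∑ i, u (p3 a i) * u (p3 a (i+1)))) + (((∑ a, ∑ i, (u (p4 a i))^2) + (∑ a, ∑ i, ∑ j, (if i ≠ j then (1/2) * (u (p4 a i) * u (p4 a j)) else 0))) + (((∑ a, ∑ i, (u (p5 a i))^2) + (∑ a, ∑ i, u (p5 a i) * u (p5 a (i+1)))) + (((∑ a, ∑ i, (u (p6 a i))^2) + (∑ a, ∑ i, ∑ j, (if i ≠ j then (1/2) * (u (p6 a i) * u (p6 a j)) else 0))) + ((∑ e, ∑ i, (u (p7 e i))^2) + (∑ e, u (p7 e 0) * u (p7 e 1))))))))) + ∑ i ∈ (Finset.univ.image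 cb)ᶜ, (u i)^2) := by
    have hXD := key2 ▸ key1
    have heq : 2 * (∑ i, ∑ j, if i < j then w i j * u i * u j else 0)
        = (1 - ∑ i, (u i)^2) - ∑ p : Fin t × Fin t, F p := by rw [← h2S, hwF]
    rw [heq]
    linarith [hXD, hsq2]
  exact final37 (t:ℝ) (l1:ℝ) (l2:ℝ) (l3:ℝ) (l4:ℝ) (l5:ℝ) (l6:ℝ) (l7:ℝ)
    (((Finset.univ.image cb)ᶜ.card : ℕ) : ℝ) _ _ _ _ _ _ _ _ _ _ _ _ _ _ _ _ _
    (Nat.cast_nonneg _) (Nat.cast_nonneg _) (Nat.cast_nonneg _) (Nat.cast_nonneg _)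
    (Nat.cast_nonneg _) (Nat.cast_nonneg _) (Nat.cast_nonneg _) (Nat.cast_nonneg _)
    hm hD hs1 hs2 hs3 hs4 hs5 hs6 hs7 hsr
    (by linarith) (by linarith) (by linarith) (by linarith) (by linarith) (by linarith)
    (by linarith) har hf1 hf2 hf3 hf4 hf5 hf6 hf7 hfr hsu hP

/-- Lemma: if a weighted complete graph on t vertices contains ℓ₁ disjoint half C₈'s,
ℓ₂ disjoint half K₅'s, ℓ₃ disjoint half C₅'s, ℓ₄ disjoint half K₄'s, ℓ₅ disjoint half
C₄'s, ℓ₆ disjoint half K₃'s and ℓ₇ independent half edges, all mutually vertex-disjoint,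
then twice its density is at most
1 − 30/(30t − 120ℓ₁ − 100ℓ₂ − 75ℓ₃ − 72ℓ₄ − 60ℓ₅ − 45ℓ₆ − 20ℓ₇). -/
theorem half_structures_density_bound_37
    (t l1 l2 l3 l4 l5 l6 l7 : ℕ) (ht : 1 ≤ t)
    (hsize : 8 * l1 + 5 * l2 + 5 * l3 + 4 * l4 + 4 * l5 + 3 * l6 + 2 * l7 ≤ t)
    (w : Fin t → Fin t → ℝ)
    (hsymm : ∀ i j, w i j = w j i)
    (hw : ∀ i j : Fin t, i ≠ j → 0 ≤ w i j ∧ w i j ≤ 1)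
    (f : (Fin l1 × Fin 8) ⊕ (Fin l2 × Fin 5) ⊕ (Fin l3 × Fin 5) ⊕ (Fin l4 × Fin 4) ⊕
          (Fin l5 × Fin 4) ⊕ (Fin l6 × Fin 3) ⊕ (Fin l7 × Fin 2) → Fin t)
    (hinj : Function.Injective f)
    (hC8 : ∀ a : Fin l1, ∀ i : Fin 8,
        w (f (Sum.inl (a, i))) (f (Sum.inl (a, i + 1))) = 1 / 2)
    (hK5 : ∀ a : Fin l2, ∀ i j : Fin 5, i ≠ j →
        w (f (Sum.inr (Sum.inl (a, i)))) (f (Sum.inr (Sum.inl (a, j)))) = 1 / 2)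
    (hC5 : ∀ a : Fin l3, ∀ i : Fin 5,
        w (f (Sum.inr (Sum.inr (Sum.inl (a, i)))))
          (f (Sum.inr (Sum.inr (Sum.inl (a, i + 1))))) = 1 / 2)
    (hK4 : ∀ a : Fin l4, ∀ i j : Fin 4, i ≠ j →
        w (f (Sum.inr (Sum.inr (Sum.inr (Sum.inl (a, i))))))
          (f (Sum.inr (Sum.inr (Sum.inr (Sum.inl (a, j)))))) = 1 / 2)
    (hC4 : ∀ a : Fin l5, ∀ i : Fin 4,
        w (f (Sum.inr (Sum.inr (Sum.inr (Sum.inr (Sum.inl (a, i)))))))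
          (f (Sum.inr (Sum.inr (Sum.inr (Sum.inr (Sum.inl (a, i + 1))))))) = 1 / 2)
    (hK3 : ∀ a : Fin l6, ∀ i j : Fin 3, i ≠ j →
        w (f (Sum.inr (Sum.inr (Sum.inr (Sum.inr (Sum.inr (Sum.inl (a, i))))))))
          (f (Sum.inr (Sum.inr (Sum.inr (Sum.inr (Sum.inr (Sum.inl (a, j)))))))) = 1 / 2)
    (hM : ∀ e : Fin l7,
        w (f (Sum.inr (Sum.inr (Sum.inr (Sum.inr (Sum.inr (Sum.inr (e, 0))))))))
          (f (Sum.inr (Sum.inr (Sum.inr (Sum.inr (Sum.inr (Sum.inr (e, 1)))))))) = 1 / 2) :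
    ∀ u : Fin t → ℝ, (∀ i, 0 ≤ u i) → ∑ i, u i = 1 →
      2 * (∑ i, ∑ j, if i < j then w i j * u i * u j else 0) ≤
        1 - 30 / (30 * (t : ℝ) - 120 * l1 - 100 * l2 - 75 * l3 - 72 * l4 - 60 * l5 -
          45 * l6 - 20 * l7) := by
  intro u hu husum
  refine aux37 t l1 l2 l3 l4 l5 l6 l7 ht hsize w hsymm hw
    (fun a i => f (Sum.inl (a, i)))
    (fun a i => f (Sum.inr (Sum.inl (a, i))))
    (fun a i => f (Sum.inr (Sum.inr (Sum.inl (a, i)))))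
    (fun a i => f (Sum.inr (Sum.inr (Sum.inr (Sum.inl (a, i))))))
    (fun a i => f (Sum.inr (Sum.inr (Sum.inr (Sum.inr (Sum.inl (a, i)))))))
    (fun a i => f (Sum.inr (Sum.inr (Sum.inr (Sum.inr (Sum.inr (Sum.inl (a, i))))))))
    (fun e i => f (Sum.inr (Sum.inr (Sum.inr (Sum.inr (Sum.inr (Sum.inr (e, i))))))))
    ?_ hC8 hK5 hC5 hK4 hC4 hK3 hM u hu husum
  intro x y h
  apply hinj
  rcases x with x|x|x|x|x|x|x <;> rcases y with y|y|y|y|y|y|y <;> exact h
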